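/- Let X be a completely metrizable space with the DD^{{0,0}}-property (for every ε > 0, any pair of points can be ε-homotopically perturbed to distinct points via paths of diameter < ε). Then X has the AP(1,0)-property: every continuous map g : I → X is, for every ε > 0, ε-homotopic to a continuous map g' : I → X all of whose fibers are zero-dimensional. -/

import Mathlib

/-- A topological space has covering dimension ≤ 0 if every finite open cover
admits a pairwise disjoint open refinement (still a cover). -/
def DimLE0 (X : Type*) [TopologicalSpace X] : Prop :=
  ∀ (ι : Type) (U : ι → Set X), Finite ι → (∀ i, IsOpen (U i)) →
    (⋃ i, U i) = Set.univ →
    ∃ V : ι → Set X, (∀ i, IsOpen (V i)) ∧ (∀ i, V i ⊆ U i) ∧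
      Pairwise (Function.onFun Disjoint V) ∧ (⋃ i, V i) = Set.univ

/-- The `n`-dimensional cube `Iⁿ`. -/
abbrev Cube (n : ℕ) := Fin n → unitInterval

/-- A map is zero-dimensional if all its fibers are zero-dimensional. -/
def ZeroDimFibers {X M : Type*} [TopologicalSpace X] [TopologicalSpace M]
    (g : X → M) : Prop :=
  ∀ y : M, DimLE0 ↥(g ⁻¹' {y})

/-- Two maps `f, g : X → M` are `ε`-homotopic if there is a homotopy between them
all of whose tracks have diameter `< ε`. -/
def EHomotopic {X M : Type*} [TopologicalSpace X] [MetricSpace M]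
    (f g : C(X, M)) (ε : ℝ) : Prop :=
  ∃ H : ContinuousMap.Homotopy f g,
    ∀ x : X, Metric.diam (Set.range fun t : unitInterval => H (t, x)) < ε

/-- `M` has the `AP(n,0)`-property: every map `Iⁿ → M` is, for each `ε > 0`,
`ε`-homotopic to a map with zero-dimensional fibers. -/
def AP (M : Type*) [MetricSpace M] (n : ℕ) : Prop :=
  ∀ ε : ℝ, 0 < ε → ∀ g : C(Cube n, M),
    ∃ g' : C(Cube n, M), ZeroDimFibers ⇑g' ∧ EHomotopic g g' ε

open Metric Set

lemma dimle0_of_dense_compl (S : Set unitInterval)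
    (hS : ∀ x y : unitInterval, x < y → ∃ z : unitInterval, x < z ∧ z < y ∧ z ∉ S) :
    DimLE0 ↥S := by
  classical
  intro ι U hι hUopen hUcover
  by_cases hne : Nonempty ↥S
  swap
  · refine ⟨fun _ => ∅, fun _ => isOpen_empty, fun _ => empty_subset _,
      fun i j _ => by simp [Function.onFun], ?_⟩
    have : IsEmpty ↥S := not_nonempty_iff.mp hne
    simp [Set.iUnion_empty, Set.univ_eq_empty_iff.mpr this]
  -- the real-valued coordinate
  set v : ↥S → ℝ := fun y => ((y : unitInterval) : ℝ) with hv
  have hvcont : Continuous v := by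
    exact continuous_subtype_val.comp continuous_subtype_val
  have hvinj : Function.Injective v := fun y z hyz => by
    apply Subtype.ext; exact Subtype.ext hyz
  -- helper : avoid values of S on the left
  have left : ∀ (x : ↥S) (ε : ℝ), 0 < ε → ∃ a : ℝ, a < v x ∧ (∀ y : ↥S, v y ≠ a) ∧
      (∀ y : ↥S, a < v y → v x - v y < ε) := by
    intro x ε hε
    by_cases hc : v x ≤ ε / 2
    · refine ⟨-1, by nlinarith [(x : unitInterval).2.1], fun y => ?_, fun y _ => ?_⟩
      · intro hEq
        have h0 : (0:ℝ) ≤ v y := (y : unitInterval).2.1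
        rw [hEq] at h0; norm_num at h0
      · have := (y : unitInterval).2.1
        simp only [hv] at *; linarith
    · push_neg at hc
      have h0 : (0:ℝ) ≤ v x - ε/2 := by linarith
      have h1 : v x - ε/2 ≤ 1 := by have := (x : unitInterval).2.2; simp only [hv] at *; linarith
      obtain ⟨z, hz1, hz2, hz3⟩ := hS ⟨v x - ε/2, h0, h1⟩ (x : unitInterval)
        (by rw [← Subtype.coe_lt_coe]; simpa using by linarith)
      refine ⟨(z : ℝ), hz2, ?_, ?_⟩
      · intro y hy
        exact hz3 (by have hyz : (y : unitInterval) = z := Subtype.ext hy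
                      rw [← hyz]; exact y.2)
      · intro y hy
        have : (v x - ε/2 : ℝ) < z := hz1
        simp only [hv] at *; linarith
  have right : ∀ (x : ↥S) (ε : ℝ), 0 < ε → ∃ b : ℝ, v x < b ∧ (∀ y : ↥S, v y ≠ b) ∧
      (∀ y : ↥S, v y < b → v y - v x < ε) := by
    intro x ε hε
    by_cases hc : 1 - ε / 2 ≤ v x
    · refine ⟨2, by nlinarith [(x : unitInterval).2.2], fun y => ?_, fun y _ => ?_⟩
      · intro hEq
        have h0 : v y ≤ 1 := (y : unitInterval).2.2
        rw [hEq] at h0; norm_num at h0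
      · have := (y : unitInterval).2.2
        simp only [hv] at *; linarith
    · push_neg at hc
      have h0 : (0:ℝ) ≤ v x + ε/2 := by have := (x : unitInterval).2.1; simp only [hv] at *; linarith
      have h1 : v x + ε/2 ≤ 1 := by linarith
      obtain ⟨z, hz1, hz2, hz3⟩ := hS (x : unitInterval) ⟨v x + ε/2, h0, h1⟩
        (by rw [← Subtype.coe_lt_coe]; simpa using by linarith)
      refine ⟨(z : ℝ), hz1, ?_, ?_⟩
      · intro y hy
        exact hz3 (by have hyz : (y : unitInterval) = z := Subtype.ext hy
                      rw [← hyz]; exact y.2)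
      · intro y hy
        have : (z : ℝ) < v x + ε/2 := hz2
        simp only [hv] at *; linarith
  -- clopen neighborhoods inside cover elements
  have clopen : ∀ x : ↥S, ∃ C : Set ↥S, IsOpen C ∧ IsClosed C ∧ x ∈ C ∧ ∃ i, C ⊆ U i := by
    intro x
    have hx : x ∈ ⋃ i, U i := by rw [hUcover]; trivial
    obtain ⟨i, hi⟩ := Set.mem_iUnion.mp hx
    obtain ⟨ε, hε, hball⟩ := Metric.isOpen_iff.mp (hUopen i) x hi
    obtain ⟨a, ha1, ha2, ha3⟩ := left x ε hε
    obtain ⟨b, hb1, hb2, hb3⟩ := right x ε hε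
    refine ⟨v ⁻¹' Ioo a b, IsOpen.preimage hvcont isOpen_Ioo, ?_, ⟨ha1, hb1⟩, i, ?_⟩
    · have : v ⁻¹' Ioo a b = v ⁻¹' Icc a b := by
        ext y
        simp only [mem_preimage, mem_Ioo, mem_Icc]
        constructor
        · rintro ⟨h1, h2⟩; exact ⟨le_of_lt h1, le_of_lt h2⟩
        · rintro ⟨h1, h2⟩
          exact ⟨lt_of_le_of_ne h1 (fun hEq => ha2 y hEq.symm),
            lt_of_le_of_ne h2 (hb2 y)⟩
      rw [this]
      exact IsClosed.preimage hvcont isClosed_Icc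
    · intro y hy
      apply hball
      obtain ⟨h1, h2⟩ := hy
      have hd : dist y x < ε := by
        have := ha3 y h1
        have := hb3 y h2
        rw [Subtype.dist_eq, Subtype.dist_eq, Real.dist_eq]
        rw [abs_lt]
        constructor <;> [skip; skip] <;> simp only [hv] at * <;> linarith
      exact hd
  -- countable subcover by clopen sets
  set 𝒞 : Set (Set ↥S) := {C | IsOpen C ∧ IsClosed C ∧ ∃ i, C ⊆ U i} with h𝒞
  obtain ⟨T, hTc, hT𝒞, hTU⟩ := TopologicalSpace.isOpen_sUnion_countable 𝒞 (fun C hC => hC.1)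
  have hTcover : ⋃₀ T = univ := by
    rw [hTU]
    apply eq_univ_of_forall
    intro x
    obtain ⟨C, hC1, hC2, hC3, hC4⟩ := clopen x
    exact ⟨C, ⟨hC1, hC2, hC4⟩, hC3⟩
  have hTne : T.Nonempty := by
    by_contra hT
    rw [Set.not_nonempty_iff_eq_empty] at hT
    rw [hT, sUnion_empty] at hTcover
    have : (hne.some) ∈ (∅ : Set ↥S) := hTcover.symm ▸ trivial
    exact this
  obtain ⟨e, he⟩ := hTc.exists_eq_range hTne
  have heC : ∀ n, e n ∈ 𝒞 := fun n => hT𝒞 (he ▸ Set.mem_range_self n)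
  have hecover : (⋃ n, e n) = univ := by
    rw [← hTcover, he, sUnion_range]
  -- disjointify
  set D : ℕ → Set ↥S := fun n => e n ∩ ⋂ m ∈ Finset.range n, (e m)ᶜ with hD
  have hDopen : ∀ n, IsOpen (D n) := by
    intro n
    apply IsOpen.inter (heC n).1
    exact isOpen_biInter_finset (fun m _ => (heC m).2.1.isOpen_compl)
  have hDsub : ∀ n, D n ⊆ e n := fun n => inter_subset_left
  have hDdisj : ∀ m n, m ≠ n → Disjoint (D m) (D n) := by
    intro m n hmn
    rcases lt_or_gt_of_ne hmn with hlt | hlt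
    · apply Set.disjoint_left.mpr
      intro x hxm hxn
      have : x ∈ (e m)ᶜ := by
        have := hxn.2
        simp only [Set.mem_iInter] at this
        exact this m (Finset.mem_range.mpr hlt)
      exact this (hDsub m hxm)
    · apply Set.disjoint_left.mpr
      intro x hxm hxn
      have : x ∈ (e n)ᶜ := by
        have := hxm.2
        simp only [Set.mem_iInter] at this
        exact this n (Finset.mem_range.mpr hlt)
      exact this (hDsub n hxn)
  have hDcover : (⋃ n, D n) = univ := by
    apply eq_univ_of_forall
    intro x
    have hx : ∃ n, x ∈ e n := by
      have : x ∈ ⋃ n, e n := by rw [hecover]; trivial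
      exact Set.mem_iUnion.mp this
    refine Set.mem_iUnion.mpr ⟨Nat.find hx, Nat.find_spec hx, ?_⟩
    simp only [Set.mem_iInter]
    intro m hm
    exact Nat.find_min hx (Finset.mem_range.mp hm)
  -- assign indices
  have hidx : ∀ n, ∃ i, e n ⊆ U i := fun n => (heC n).2.2
  set idx : ℕ → ι := fun n => (hidx n).choose with hidxdef
  have hidxspec : ∀ n, e n ⊆ U (idx n) := fun n => (hidx n).choose_spec
  refine ⟨fun i => ⋃ n ∈ {n | idx n = i}, D n, ?_, ?_, ?_, ?_⟩
  · intro i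
    exact isOpen_biUnion (fun n _ => hDopen n)
  · intro i y hy
    simp only [Set.mem_iUnion] at hy
    obtain ⟨n, hn, hyn⟩ := hy
    exact hn ▸ hidxspec n (hDsub n hyn)
  · intro i j hij
    apply Set.disjoint_left.mpr
    intro x hxi hxj
    simp only [Set.mem_iUnion] at hxi hxj
    obtain ⟨n, hn, hxn⟩ := hxi
    obtain ⟨m, hm, hxm⟩ := hxj
    have hnm : n ≠ m := fun hEq => hij (by rw [← hn, ← hm, hEq])
    exact Set.disjoint_left.mp (hDdisj n m hnm) hxn hxm
  · apply eq_univ_of_forall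
    intro x
    have : x ∈ ⋃ n, D n := by rw [hDcover]; trivial
    obtain ⟨n, hn⟩ := Set.mem_iUnion.mp this
    refine Set.mem_iUnion.mpr ⟨idx n, ?_⟩
    simp only [Set.mem_iUnion, Set.mem_setOf_eq]
    exact ⟨n, rfl, hn⟩

section StepLemma
open Metric Set

variable {X : Type*} [MetricSpace X]

set_option maxHeartbeats 2000000 in
lemma step_lemma
    (h : ∀ ε : ℝ, 0 < ε → ∀ f g : X, ∃ f' g' : X, f' ≠ g' ∧
      (∃ p : Path f f', Metric.diam (Set.range p) < ε) ∧
      (∃ q : Path g g', Metric.diam (Set.range q) < ε))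
    (g : C(unitInterval, X)) (F : Finset unitInterval)
    (a b : unitInterval) (hab : a < b) (ε' : ℝ) (hε' : 0 < ε') :
    ∃ g₁ : C(unitInterval, X), ∃ u v : unitInterval,
      (a:ℝ) < u ∧ (u:ℝ) < b ∧ (a:ℝ) < v ∧ (v:ℝ) < b ∧ g₁ u ≠ g₁ v ∧
      (∀ w ∈ F, g₁ w = g w) ∧
      ∃ H : ContinuousMap.Homotopy g g₁,
        ∀ x : unitInterval, Metric.diam (Set.range fun t : unitInterval => H (t, x)) ≤ ε' := by
  classical
  -- uniform continuity
  obtain ⟨δ, hδpos, hδ⟩ := Metric.uniformContinuous_iff.mp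
    (CompactSpace.uniformContinuous_of_continuous g.continuous) (ε'/3) (by linarith)
  -- pick a point γ in (a,b) avoiding F
  have habR : (a:ℝ) < (b:ℝ) := hab
  have hIooInf : (Set.Ioo (a:ℝ) (b:ℝ)).Infinite := Set.Ioo_infinite habR
  have hdiff : ((Set.Ioo (a:ℝ) (b:ℝ)) \ ((fun w : unitInterval => (w:ℝ)) '' F)).Infinite :=
    hIooInf.diff ((F.finite_toSet).image _)
  obtain ⟨γ, hγmem, hγF⟩ := hdiff.nonempty
  obtain ⟨hγa, hγb⟩ := hγmem
  -- the radius r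
  set FR : Finset ℝ := F.image Subtype.val with hFR
  set T : Finset ℝ := insert (min (γ - a) (min (b - γ) (δ/3)))
      (FR.image fun x => |γ - x|) with hT
  have hTne : T.Nonempty := ⟨_, Finset.mem_insert_self _ _⟩
  set r : ℝ := T.min' hTne with hrdef
  have hrpos : 0 < r := by
    apply (Finset.lt_min'_iff T hTne).mpr
    intro y hy
    rcases Finset.mem_insert.mp hy with hy | hy
    · subst hy
      apply lt_min (by linarith) (lt_min (by linarith) (by linarith))
    · obtain ⟨x, hx, hwy⟩ := Finset.mem_image.mp hy
      obtain ⟨w, hw, hwx⟩ := Finset.mem_image.mp hx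
      subst hwy
      subst hwx
      rw [abs_pos, sub_ne_zero]
      intro hEq
      exact hγF ⟨w, by simpa using hw, hEq.symm⟩
  have hrle1 : r ≤ γ - a :=
    (Finset.min'_le T _ (Finset.mem_insert_self _ _)).trans (min_le_left _ _)
  have hrle2 : r ≤ b - γ := (Finset.min'_le T _ (Finset.mem_insert_self _ _)).trans
    ((min_le_right _ _).trans (min_le_left _ _))
  have hrleδ : r ≤ δ/3 := (Finset.min'_le T _ (Finset.mem_insert_self _ _)).trans
    ((min_le_right _ _).trans (min_le_right _ _))
  have hrF : ∀ w ∈ F, r ≤ |γ - (w:ℝ)| := fun w hw =>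
    Finset.min'_le T _ (Finset.mem_insert_of_mem
      (Finset.mem_image_of_mem _ (Finset.mem_image_of_mem _ hw)))
  clear_value r
  clear_value T
  -- geometry
  set a' : ℝ := γ - r/2 with ha'
  set b' : ℝ := γ + r/2 with hb'
  set u' : ℝ := a' + r/4 with hu'
  set v' : ℝ := b' - r/4 with hv'
  set u : ℝ := a' + 3*r/8 with hu
  set v : ℝ := b' - 3*r/8 with hvv
  clear_value a' b'
  clear_value u' v' u v
  have ha'0 : (0:ℝ) ≤ a' := by have := a.2.1; simp only [ha']; linarith
  have hb'1 : b' ≤ 1 := by have := b.2.2; simp only [hb']; linarith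
  have haa' : (a:ℝ) < a' := by simp only [ha']; linarith
  have hb'b : b' < (b:ℝ) := by simp only [hb']; linarith
  have hFout : ∀ w ∈ F, (w:ℝ) ≤ a' ∨ b' ≤ (w:ℝ) := by
    intro w hw
    have := hrF w hw
    rcases abs_cases (γ - (w:ℝ)) with ⟨hEq, _⟩ | ⟨hEq, _⟩ <;> rw [hEq] at this
    · left; simp only [ha']; linarith
    · right; simp only [hb']; linarith
  -- the squeezing retraction
  set r₁ : ℝ → ℝ := fun x =>
    min (max x (min (a' + 2*(x - a')) γ)) (max (b' + 2*(x - b')) γ) with hr₁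
  have hr₁cont : Continuous r₁ := by
    have c1 : Continuous fun x : ℝ => a' + 2*(x - a') :=
      continuous_const.add (continuous_const.mul (continuous_id.sub continuous_const))
    have c2 : Continuous fun x : ℝ => b' + 2*(x - b') :=
      continuous_const.add (continuous_const.mul (continuous_id.sub continuous_const))
    exact (continuous_id.max (c1.min continuous_const)).min (c2.max continuous_const)
  have hr₁id : ∀ x : ℝ, x ≤ a' ∨ b' ≤ x → r₁ x = x := by
    intro x hx
    rcases hx with hx | hx
    · have h1 : min (a' + 2*(x - a')) γ ≤ x :=
        le_trans (min_le_left _ _) (by linarith)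
      simp only [hr₁]
      rw [max_eq_left h1]
      exact min_eq_left (le_trans (by linarith : x ≤ γ) (le_max_right _ _))
    · have h1 : γ ≤ a' + 2*(x - a') := by linarith
      have h2 : min (a' + 2*(x - a')) γ = γ := min_eq_right h1
      simp only [hr₁]
      rw [h2, max_eq_left (by linarith : γ ≤ x)]
      have h3 : max (b' + 2*(x - b')) γ = b' + 2*(x - b') :=
        max_eq_left (by linarith)
      rw [h3]
      exact min_eq_left (by linarith)
  have hr₁c : ∀ x : ℝ, u' ≤ x → x ≤ v' → r₁ x = γ := by
    intro x hx1 hx2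
    have h1 : min (a' + 2*(x - a')) γ = γ := min_eq_right (by simp only [hu'] at hx1; linarith)
    have h2 : max (b' + 2*(x - b')) γ = γ := max_eq_right (by simp only [hv'] at hx2; linarith)
    simp only [hr₁]
    rw [h1, h2]
    exact min_eq_right (le_max_right _ _)
  have hr₁mem : ∀ x : ℝ, a' ≤ x → x ≤ b' → a' ≤ r₁ x ∧ r₁ x ≤ b' := by
    intro x hx1 hx2
    constructor
    · apply le_min
      · exact le_trans hx1 (le_max_left _ _)
      · exact le_trans (by linarith : a' ≤ γ) (le_max_right _ _)
    · refine le_trans (min_le_right _ _) ?_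
      exact max_le (by linarith) (by linarith)
  -- bump functions
  set φ : ℝ → ℝ := fun x => max 0 (1 - |x - u| / (r/8)) with hφ
  set ψ : ℝ → ℝ := fun x => max 0 (1 - |x - v| / (r/8)) with hψ
  have hφcont : Continuous φ := by
    apply continuous_const.max
    exact (continuous_const.sub (((continuous_id.sub continuous_const).abs).div_const _))
  have hψcont : Continuous ψ := by
    apply continuous_const.max
    exact (continuous_const.sub (((continuous_id.sub continuous_const).abs).div_const _))
  have hφu : φ u = 1 := by
    simp only [hφ, sub_self, abs_zero, zero_div, sub_zero]
    exact max_eq_right zero_le_one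
  have hψv : ψ v = 1 := by
    simp only [hψ, sub_self, abs_zero, zero_div, sub_zero]
    exact max_eq_right zero_le_one
  have hφ0 : ∀ x : ℝ, r/8 ≤ |x - u| → φ x = 0 := by
    intro x hx
    apply max_eq_left
    have : 1 ≤ |x - u| / (r/8) := (one_le_div (by linarith)).mpr hx
    linarith
  have hψ0 : ∀ x : ℝ, r/8 ≤ |x - v| → ψ x = 0 := by
    intro x hx
    apply max_eq_left
    have : 1 ≤ |x - v| / (r/8) := (one_le_div (by linarith)).mpr hx
    linarith
  have hφmem : ∀ x : ℝ, 0 ≤ φ x ∧ φ x ≤ 1 := by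
    intro x
    refine ⟨le_max_left _ _, max_le zero_le_one ?_⟩
    have h1 : 0 ≤ |x - u| / (r/8) := div_nonneg (abs_nonneg _) (by linarith)
    linarith
  have hψmem : ∀ x : ℝ, 0 ≤ ψ x ∧ ψ x ≤ 1 := by
    intro x
    refine ⟨le_max_left _ _, max_le zero_le_one ?_⟩
    have h1 : 0 ≤ |x - v| / (r/8) := div_nonneg (abs_nonneg _) (by linarith)
    linarith
  -- time reparametrizations
  set τ : ℝ → ℝ := fun s => max (2*s - 1) 0 with hτ
  have hτcont : Continuous τ :=
    ((continuous_const.mul continuous_id).sub continuous_const).max continuous_const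
  have hτ0 : ∀ s : ℝ, s ≤ 1/2 → τ s = 0 := fun s hs => max_eq_right (by linarith)
  have hτ1 : τ 1 = 1 := by simp only [hτ]; norm_num
  have hτmem : ∀ s : ℝ, s ≤ 1 → 0 ≤ τ s ∧ τ s ≤ 1 :=
    fun s hs => ⟨le_max_right _ _, max_le (by linarith) zero_le_one⟩
  -- the DD^{0,0} perturbation at the center point
  have hγ01 : γ ∈ Set.Icc (0:ℝ) 1 := ⟨by linarith, by linarith⟩
  set cI : unitInterval := ⟨γ, hγ01⟩ with hcI
  obtain ⟨x₁, x₂, hx12, ⟨p, hp⟩, ⟨q, hq⟩⟩ := h (ε'/3) (by linarith) (g cI) (g cI)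
  -- extended g
  set ge : ℝ → X := fun t => g (Set.projIcc 0 1 zero_le_one t) with hge
  have hgecont : Continuous ge := g.continuous.comp continuous_projIcc
  have hgeI : ∀ t : unitInterval, ge (t:ℝ) = g t := by
    intro t; simp only [hge, Set.projIcc_val]
  have hgeIcc : ∀ t : ℝ, (ht : t ∈ Set.Icc (0:ℝ) 1) → ge t = g ⟨t, ht⟩ := by
    intro t ht
    simp only [hge]
    exact congrArg (⇑g) (Set.projIcc_of_mem zero_le_one ht)
  have hgeγ : ge γ = g cI := hgeIcc γ hγ01
  -- the two stages of the homotopy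
  set A : ℝ × ℝ → X := fun sx => ge (sx.2 + (min (2*sx.1) 1) * (r₁ sx.2 - sx.2)) with hA
  set B : ℝ × ℝ → X := fun sx =>
    if sx.2 ≤ u' then ge (r₁ sx.2)
    else if sx.2 ≤ γ then p.extend (τ sx.1 * φ sx.2)
    else if sx.2 ≤ v' then q.extend (τ sx.1 * ψ sx.2)
    else ge (r₁ sx.2) with hB
  set Hr : ℝ × ℝ → X := fun sx => if sx.1 ≤ 1/2 then A sx else B sx with hHr
  have hAcont : Continuous A := by
    apply hgecont.comp
    exact continuous_snd.add
      (((continuous_const.mul continuous_fst).min continuous_const).mul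
        ((hr₁cont.comp continuous_snd).sub continuous_snd))
  have hgr₁cont : Continuous fun sx : ℝ × ℝ => ge (r₁ sx.2) :=
    hgecont.comp (hr₁cont.comp continuous_snd)
  have hpcont : Continuous fun sx : ℝ × ℝ => p.extend (τ sx.1 * φ sx.2) :=
    p.continuous_extend.comp ((hτcont.comp continuous_fst).mul (hφcont.comp continuous_snd))
  have hqcont : Continuous fun sx : ℝ × ℝ => q.extend (τ sx.1 * ψ sx.2) :=
    q.continuous_extend.comp ((hτcont.comp continuous_fst).mul (hψcont.comp continuous_snd))
  have hφu' : φ u' = 0 := by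
    apply hφ0
    rw [abs_sub_comm]
    rw [abs_of_nonneg (by simp only [hu, hu']; linarith)]
    simp only [hu, hu']; linarith
  have hφγ : φ γ = 0 := by
    apply hφ0
    rw [abs_of_nonneg (by simp only [hu, ha']; linarith)]
    simp only [hu, ha']; linarith
  have hψγ : ψ γ = 0 := by
    apply hψ0
    rw [abs_sub_comm]
    rw [abs_of_nonneg (by simp only [hvv, hb']; linarith)]
    simp only [hvv, hb']; linarith
  have hψv' : ψ v' = 0 := by
    apply hψ0
    rw [abs_of_nonneg (by simp only [hvv, hv']; linarith)]
    simp only [hvv, hv']; linarith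
  have hu'γ : u' ≤ γ := by simp only [hu', ha']; linarith
  have hγv' : γ ≤ v' := by simp only [hv', hb']; linarith
  have hu'v' : u' ≤ v' := le_trans hu'γ hγv'
  have hr₁u' : r₁ u' = γ := hr₁c u' le_rfl hu'v'
  have hr₁v' : r₁ v' = γ := hr₁c v' hu'v' le_rfl
  have hBcont : Continuous B := by
    apply Continuous.if_le _ _ continuous_snd continuous_const
    · -- inner: at frontier x = u'
      intro sx hsx
      rw [hsx, hr₁u', hgeγ, if_pos hu'γ, hφu', mul_zero, Path.extend_zero]
    · exact hgr₁cont
    · apply Continuous.if_le _ _ continuous_snd continuous_const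
      · intro sx hsx
        rw [hsx, hφγ, mul_zero, Path.extend_zero, if_pos hγv', hψγ, mul_zero, Path.extend_zero]
      · exact hpcont
      · apply Continuous.if_le hqcont hgr₁cont continuous_snd continuous_const
        intro sx hsx
        rw [hsx, hψv', mul_zero, Path.extend_zero, hr₁v', hgeγ]
  have hABfrontier : ∀ sx : ℝ × ℝ, sx.1 = 1/2 → A sx = B sx := by
    intro ⟨s, x⟩ hs
    simp only at hs
    subst hs
    have hA2 : A (1/2, x) = ge (r₁ x) := by
      simp only [hA]
      norm_num
    rw [hA2]
    simp only [hB]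
    have hτhalf : τ (1/2) = 0 := hτ0 _ le_rfl
    split_ifs with h1 h2 h3
    · rfl
    · rw [hτhalf, zero_mul, Path.extend_zero, hr₁c x (le_of_not_ge h1) (le_trans h2 hγv'), hgeγ]
    · rw [hτhalf, zero_mul, Path.extend_zero, hr₁c x (le_of_not_ge h1) h3, hgeγ]
    · rfl
  have hHrcont : Continuous Hr :=
    Continuous.if_le hAcont hBcont continuous_fst continuous_const hABfrontier
  -- the target map
  set g₁ : C(unitInterval, X) := ⟨fun x => Hr (1, (x:ℝ)),
    hHrcont.comp (continuous_const.prodMk continuous_subtype_val)⟩ with hg₁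
  -- membership of u, v
  have humem : u ∈ Set.Icc (0:ℝ) 1 := by
    constructor
    · simp only [hu]; linarith
    · simp only [hu, ha']; linarith
  have hvmem : v ∈ Set.Icc (0:ℝ) 1 := by
    constructor
    · simp only [hvv, hb']; linarith
    · simp only [hvv]; linarith
  have hone : ¬ ((1:ℝ) ≤ 1/2) := by norm_num
  have hu'u : u' < u := by simp only [hu, hu']; linarith
  have huγ : u < γ := by simp only [hu, ha']; linarith
  have hγv : γ < v := by simp only [hvv, hb']; linarith
  have hvv' : v < v' := by simp only [hvv, hv']; linarith
  have hg₁u : g₁ ⟨u, humem⟩ = x₁ := by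
    show Hr (1, u) = x₁
    simp only [hHr, hB]
    rw [if_neg hone, if_neg (by push_neg; exact hu'u), if_pos (le_of_lt huγ), hτ1, hφu,
      mul_one, Path.extend_one]
  have hg₁v : g₁ ⟨v, hvmem⟩ = x₂ := by
    show Hr (1, v) = x₂
    simp only [hHr, hB]
    rw [if_neg hone, if_neg (by push_neg; exact lt_trans hu'u (lt_trans huγ hγv)),
      if_neg (by push_neg; exact hγv), if_pos (le_of_lt hvv'), hτ1, hψv, mul_one,
      Path.extend_one]
  -- values outside (a',b') are unchanged at every time
  have hfrozen : ∀ (s : ℝ) (x : unitInterval), (x:ℝ) ≤ a' ∨ b' ≤ (x:ℝ) → Hr (s, (x:ℝ)) = g x := by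
    intro s x hx
    have hid : r₁ (x:ℝ) = (x:ℝ) := hr₁id _ hx
    simp only [hHr, hA, hB]
    split_ifs with h1 h2 h3 h4
    · rw [hid]; simp only [sub_self, mul_zero, add_zero]; exact hgeI x
    · rw [hid]; exact hgeI x
    · exfalso
      rcases hx with hx | hx
      · exact h2 (le_trans hx (by simp only [hu']; linarith))
      · simp only [hu'] at h2 h3
        have : b' ≤ γ := le_trans hx h3
        simp only [hb'] at this; linarith
    · exfalso
      rcases hx with hx | hx
      · exact h2 (le_trans hx (by simp only [hu']; linarith))
      · simp only [hv'] at h4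
        have := le_trans hx h4
        linarith
    · rw [hid]; exact hgeI x
  -- the homotopy
  set H : ContinuousMap.Homotopy g g₁ :=
    { toFun := fun tx => Hr ((tx.1:ℝ), (tx.2:ℝ))
      continuous_toFun := hHrcont.comp
        ((continuous_subtype_val.comp continuous_fst).prodMk
          (continuous_subtype_val.comp continuous_snd))
      map_zero_left := by
        intro x
        show Hr (((0:unitInterval):ℝ), (x:ℝ)) = g x
        simp only [Set.Icc.coe_zero, hHr, hA]
        rw [if_pos (by norm_num : (0:ℝ) ≤ 1/2)]
        have : min (2*(0:ℝ)) 1 = 0 := by norm_num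
        simp only [this, zero_mul, add_zero]
        exact hgeI x
      map_one_left := by
        intro x
        show Hr (((1:unitInterval):ℝ), (x:ℝ)) = g₁ x
        simp only [Set.Icc.coe_one]
        rfl } with hH
  refine ⟨g₁, ⟨u, humem⟩, ⟨v, hvmem⟩, ?_, ?_, ?_, ?_, ?_, ?_, H, ?_⟩
  · show (a:ℝ) < u; simp only [hu]; linarith
  · show u < (b:ℝ); simp only [hu, ha']; linarith
  · show (a:ℝ) < v; simp only [hvv, hb']; linarith
  · show v < (b:ℝ); simp only [hvv]; linarith
  · rw [hg₁u, hg₁v]; exact hx12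
  · intro w hw
    show Hr (1, (w:ℝ)) = g w
    exact hfrozen 1 w (hFout w hw)
  · -- track bounds
    intro x
    have hptrack : ∀ t : ℝ, 0 ≤ t → t ≤ 1 → dist (p.extend t) (g cI) ≤ ε'/3 := by
      intro t ht0 ht1
      rw [Path.extend_apply p ⟨ht0, ht1⟩]
      have hb : Bornology.IsBounded (Set.range p) :=
        (isCompact_range p.continuous).isBounded
      calc dist (p ⟨t, ht0, ht1⟩) (g cI) = dist (p ⟨t, ht0, ht1⟩) (p 0) := by
            rw [Path.source]
        _ ≤ Metric.diam (Set.range p) := by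
            apply Metric.dist_le_diam_of_mem hb (Set.mem_range_self _) (Set.mem_range_self _)
        _ ≤ ε'/3 := le_of_lt hp
    have hqtrack : ∀ t : ℝ, 0 ≤ t → t ≤ 1 → dist (q.extend t) (g cI) ≤ ε'/3 := by
      intro t ht0 ht1
      rw [Path.extend_apply q ⟨ht0, ht1⟩]
      have hb : Bornology.IsBounded (Set.range q) :=
        (isCompact_range q.continuous).isBounded
      calc dist (q ⟨t, ht0, ht1⟩) (g cI) = dist (q ⟨t, ht0, ht1⟩) (q 0) := by
            rw [Path.source]
        _ ≤ Metric.diam (Set.range q) := by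
            apply Metric.dist_le_diam_of_mem hb (Set.mem_range_self _) (Set.mem_range_self _)
        _ ≤ ε'/3 := le_of_lt hq
    have hgnear : ∀ t : ℝ, a' ≤ t → t ≤ b' → dist (ge t) (g cI) ≤ ε'/3 := by
      intro t ht1 ht2
      have htI : t ∈ Set.Icc (0:ℝ) 1 := ⟨le_trans ha'0 ht1, le_trans ht2 hb'1⟩
      rw [hgeIcc t htI]
      apply le_of_lt
      apply hδ
      rw [Subtype.dist_eq, Real.dist_eq]
      have : |t - γ| ≤ r/2 := by
        rw [abs_le]
        constructor
        · simp only [ha'] at ht1; linarith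
        · simp only [hb'] at ht2; linarith
      calc |(⟨t, htI⟩ : unitInterval) - (cI:ℝ)| = |t - γ| := rfl
        _ ≤ r/2 := this
        _ < δ := by linarith
    rcases le_or_gt (x:ℝ) a' with hcase | hcase
    · -- outside: constant track
      apply Metric.diam_le_of_forall_dist_le (by linarith)
      rintro y ⟨t, rfl⟩ z ⟨t', rfl⟩
      show dist (Hr ((t:ℝ), (x:ℝ))) (Hr ((t':ℝ), (x:ℝ))) ≤ ε'
      rw [hfrozen t x (Or.inl hcase), hfrozen t' x (Or.inl hcase)]
      simp; linarith
    rcases le_or_gt b' (x:ℝ) with hcase2 | hcase2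
    · apply Metric.diam_le_of_forall_dist_le (by linarith)
      rintro y ⟨t, rfl⟩ z ⟨t', rfl⟩
      show dist (Hr ((t:ℝ), (x:ℝ))) (Hr ((t':ℝ), (x:ℝ))) ≤ ε'
      rw [hfrozen t x (Or.inr hcase2), hfrozen t' x (Or.inr hcase2)]
      simp; linarith
    · -- inside: everything stays near g cI
      have hxa' : a' ≤ (x:ℝ) := le_of_lt hcase
      have hxb' : (x:ℝ) ≤ b' := le_of_lt hcase2
      have key : ∀ t : unitInterval, dist (Hr ((t:ℝ), (x:ℝ))) (g cI) ≤ ε'/3 := by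
        intro t
        have ht0 : (0:ℝ) ≤ t := t.2.1
        have ht1 : (t:ℝ) ≤ 1 := t.2.2
        simp only [hHr, hA, hB]
        split_ifs with h1 h2 h3 h4
        · -- squeezing stage
          set m : ℝ := min (2*(t:ℝ)) 1 with hm
          have hm0 : 0 ≤ m := le_min (by linarith) zero_le_one
          have hm1 : m ≤ 1 := min_le_right _ _
          obtain ⟨hr1, hr2⟩ := hr₁mem (x:ℝ) hxa' hxb'
          apply hgnear
          · have e1 : (x:ℝ) + m*(r₁ (x:ℝ) - (x:ℝ)) - a'
                = (1-m)*((x:ℝ) - a') + m*(r₁ (x:ℝ) - a') := by ring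
            have e2 : 0 ≤ (1-m)*((x:ℝ) - a') := mul_nonneg (by linarith) (by linarith)
            have e3 : 0 ≤ m*(r₁ (x:ℝ) - a') := mul_nonneg hm0 (by linarith)
            linarith
          · have e1 : b' - ((x:ℝ) + m*(r₁ (x:ℝ) - (x:ℝ)))
                = (1-m)*(b' - (x:ℝ)) + m*(b' - r₁ (x:ℝ)) := by ring
            have e2 : 0 ≤ (1-m)*(b' - (x:ℝ)) := mul_nonneg (by linarith) (by linarith)
            have e3 : 0 ≤ m*(b' - r₁ (x:ℝ)) := mul_nonneg hm0 (by linarith)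
            linarith
        · apply hgnear
          · exact (hr₁mem (x:ℝ) hxa' hxb').1
          · exact (hr₁mem (x:ℝ) hxa' hxb').2
        · apply hptrack
          · exact mul_nonneg (hτmem _ ht1).1 (hφmem _).1
          · exact mul_le_one₀ (hτmem _ ht1).2 (hφmem _).1 (hφmem _).2
        · apply hqtrack
          · exact mul_nonneg (hτmem _ ht1).1 (hψmem _).1
          · exact mul_le_one₀ (hτmem _ ht1).2 (hψmem _).1 (hψmem _).2
        · apply hgnear
          · exact (hr₁mem (x:ℝ) hxa' hxb').1
          · exact (hr₁mem (x:ℝ) hxa' hxb').2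
      apply Metric.diam_le_of_forall_dist_le (by linarith)
      rintro y ⟨t, rfl⟩ z ⟨t', rfl⟩
      calc dist (H (t, x)) (H (t', x)) ≤ dist (H (t, x)) (g cI) + dist (g cI) (H (t', x)) :=
            dist_triangle _ _ _
        _ ≤ ε'/3 + ε'/3 := by
            refine add_le_add (key t) ?_
            rw [dist_comm]; exact key t'
        _ ≤ ε' := by linarith

end StepLemma

section Concat
open Metric Set Filter

set_option maxHeartbeats 2000000 in
lemma concat_homotopy {X : Type*} [MetricSpace X] [CompleteSpace X] (ε : ℝ) (hε : 0 < ε)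
    (G : ℕ → C(unitInterval, X)) (Glim : C(unitInterval, X))
    (H : ∀ n, ContinuousMap.Homotopy (G n) (G (n+1)))
    (htrack : ∀ n (x : unitInterval),
      Metric.diam (Set.range fun t : unitInterval => (H n) (t, x)) ≤ ε / 2^(n+3))
    (hlim : ∀ x : unitInterval, Tendsto (fun n => G n x) atTop (nhds (Glim x))) :
    ∃ K : ContinuousMap.Homotopy (G 0) Glim,
      ∀ x : unitInterval, Metric.diam (Set.range fun t : unitInterval => K (t, x)) ≤ ε/2 := by
  classical
  have hbdd : ∀ n (x : unitInterval),
      Bornology.IsBounded (Set.range fun t : unitInterval => (H n) (t, x)) := by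
    intro n x
    apply IsCompact.isBounded
    apply isCompact_range
    exact (H n).continuous.comp (continuous_id.prodMk continuous_const)
  have tb : ∀ n (x : unitInterval) (s : unitInterval),
      dist ((H n) (s, x)) (G n x) ≤ ε / 2^(n+3) := by
    intro n x s
    have h0 : (G n) x = (H n) (0, x) := ((H n).apply_zero x).symm
    rw [h0]
    exact le_trans (Metric.dist_le_diam_of_mem (hbdd n x)
      (Set.mem_range_self s) (Set.mem_range_self 0)) (htrack n x)
  have tb1 : ∀ n (x : unitInterval) (s : unitInterval),
      dist ((H n) (s, x)) (G (n+1) x) ≤ ε / 2^(n+3) := by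
    intro n x s
    have h0 : (G (n+1)) x = (H n) (1, x) := ((H n).apply_one x).symm
    rw [h0]
    exact le_trans (Metric.dist_le_diam_of_mem (hbdd n x)
      (Set.mem_range_self s) (Set.mem_range_self 1)) (htrack n x)
  have hG0 : ∀ n (x : unitInterval), dist (G n x) (G 0 x) ≤ ε/4 - ε/2^(n+2) := by
    intro n
    induction n with
    | zero => intro x; rw [dist_self]; norm_num
    | succ n ih =>
      intro x
      have h1 : dist (G (n+1) x) (G n x) ≤ ε / 2^(n+3) := by
        have := tb1 n x 1
        rw [(H n).apply_one x] at this
        calc dist (G (n+1) x) (G n x) = dist ((H n) (0, x)) (G (n+1) x) := by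
              rw [(H n).apply_zero x, dist_comm]
          _ ≤ ε / 2^(n+3) := tb1 n x 0
      have h2 : (ε:ℝ)/2^(n+3) + (ε/4 - ε/2^(n+2)) = ε/4 - ε/2^(n+3) := by
        have : (2:ℝ)^(n+3) = 2 * 2^(n+2) := by ring
        rw [this]; field_simp; ring
      calc dist (G (n+1) x) (G 0 x) ≤ dist (G (n+1) x) (G n x) + dist (G n x) (G 0 x) :=
            dist_triangle _ _ _
        _ ≤ ε / 2^(n+3) + (ε/4 - ε/2^(n+2)) := add_le_add h1 (ih x)
        _ = ε/4 - ε/2^(n+3) := h2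
  -- chunk endpoints
  set c : ℕ → ℝ := fun n => 1 - (1/2)^n with hcdef
  have hc0 : c 0 = 0 := by simp [hcdef]
  have hcnonneg : ∀ n, 0 ≤ c n := by
    intro n
    simp only [hcdef, sub_nonneg]
    exact pow_le_one₀ (by norm_num) (by norm_num)
  have hcle1 : ∀ n, c n ≤ 1 := by
    intro n
    simp only [hcdef]
    have : (0:ℝ) ≤ (1/2)^n := by positivity
    linarith
  have hcmono : ∀ n, c n < c (n+1) := by
    intro n
    simp only [hcdef]
    have : (1/2:ℝ)^(n+1) < (1/2)^n := by
      apply pow_lt_pow_right_of_lt_one₀ (by norm_num) (by norm_num)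
      omega
    linarith
  have hcdiff : ∀ n, c (n+1) - c n = (1/2)^(n+1) := by
    intro n
    simp only [hcdef]
    have : (1/2:ℝ)^(n+1) = (1/2)^n * (1/2) := pow_succ _ _
    rw [this]; ring
  -- the finite concatenations
  set KF : ℕ → ℝ × unitInterval → X := fun N => Nat.rec
    (fun sx => (H 0) (Set.projIcc 0 1 zero_le_one (2*sx.1), sx.2))
    (fun N ih sx => if sx.1 ≤ c (N+1) then ih sx
      else (H (N+1)) (Set.projIcc 0 1 zero_le_one (2^(N+2) * (sx.1 - c (N+1))), sx.2)) N
    with hKFdef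
  have hKF0 : ∀ sx, KF 0 sx = (H 0) (Set.projIcc 0 1 zero_le_one (2*sx.1), sx.2) := fun _ => rfl
  have hKFs : ∀ N sx, KF (N+1) sx = if sx.1 ≤ c (N+1) then KF N sx
      else (H (N+1)) (Set.projIcc 0 1 zero_le_one (2^(N+2) * (sx.1 - c (N+1))), sx.2) :=
    fun _ _ => rfl
  have claim2 : ∀ N (s : ℝ) (x : unitInterval), c (N+1) ≤ s → KF N (s, x) = G (N+1) x := by
    intro N
    induction N with
    | zero =>
      intro s x hs
      rw [hKF0]
      have h1 : (1:ℝ) ≤ 2*s := by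
        have := hcdiff 0
        have h0 := hc0
        simp only [hcdef] at hs ⊢
        norm_num at hs ⊢
        linarith
      have : Set.projIcc (0:ℝ) 1 zero_le_one (2*s) = 1 := by
        rw [Set.projIcc_of_right_le _ h1]; rfl
      rw [this]
      exact (H 0).apply_one x
    | succ N ih =>
      intro s x hs
      rw [hKFs]
      have hlt : c (N+1) < s := lt_of_lt_of_le (hcmono (N+1)) hs
      rw [if_neg (not_le.mpr hlt)]
      have h1 : (1:ℝ) ≤ 2^(N+2) * (s - c (N+1)) := by
        have hd : c (N+2) - c (N+1) = (1/2:ℝ)^(N+2) := hcdiff (N+1)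
        have hs' : c (N+2) ≤ s := hs
        have hp : (0:ℝ) < 2^(N+2) := by positivity
        have h2 : (1/2:ℝ)^(N+2) ≤ s - c (N+1) := by rw [← hd]; linarith
        have h3 : (2:ℝ)^(N+2) * (1/2)^(N+2) = 1 := by
          rw [← mul_pow]; norm_num
        calc (1:ℝ) = 2^(N+2) * (1/2)^(N+2) := h3.symm
          _ ≤ 2^(N+2) * (s - c (N+1)) := by
              apply mul_le_mul_of_nonneg_left h2 (le_of_lt hp)
      rw [Set.projIcc_of_right_le _ h1]
      show (H (N+1)) (1, x) = _
      exact (H (N+1)).apply_one x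
  have claim0 : ∀ N (x : unitInterval), KF N (0, x) = G 0 x := by
    intro N
    induction N with
    | zero =>
      intro x
      rw [hKF0]
      have : Set.projIcc (0:ℝ) 1 zero_le_one (2*0) = 0 := by
        rw [show (2*(0:ℝ)) = 0 by norm_num,
          Set.projIcc_of_mem _ (by norm_num : (0:ℝ) ∈ Set.Icc (0:ℝ) 1)]; rfl
      rw [this]
      exact (H 0).apply_zero x
    | succ N ih =>
      intro x
      rw [hKFs, if_pos (hcnonneg (N+1))]
      exact ih x
  have hKFcont : ∀ N, Continuous (KF N) := by
    intro N
    induction N with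
    | zero =>
      have : Continuous fun sx : ℝ × unitInterval =>
          ((Set.projIcc (0:ℝ) 1 zero_le_one (2*sx.1), sx.2) : unitInterval × unitInterval) :=
        (continuous_projIcc.comp (continuous_const.mul continuous_fst)).prodMk continuous_snd
      exact (H 0).continuous.comp this
    | succ N ih =>
      have hcont2 : Continuous fun sx : ℝ × unitInterval =>
          (H (N+1)) (Set.projIcc 0 1 zero_le_one (2^(N+2) * (sx.1 - c (N+1))), sx.2) := by
        apply (H (N+1)).continuous.comp
        exact (continuous_projIcc.comp
          (continuous_const.mul (continuous_fst.sub continuous_const))).prodMk continuous_snd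
      have heq : ∀ sx : ℝ × unitInterval, sx.1 = c (N+1) → KF N sx =
          (H (N+1)) (Set.projIcc 0 1 zero_le_one (2^(N+2) * (sx.1 - c (N+1))), sx.2) := by
        intro ⟨s, x⟩ hs
        simp only at hs
        subst hs
        rw [claim2 N _ x le_rfl]
        have : (2:ℝ)^(N+2) * (c (N+1) - c (N+1)) = 0 := by ring
        rw [this]
        have : Set.projIcc (0:ℝ) 1 zero_le_one 0 = 0 := by
          rw [Set.projIcc_of_mem _ (by norm_num : (0:ℝ) ∈ Set.Icc (0:ℝ) 1)]; rfl
        rw [this]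
        exact ((H (N+1)).apply_zero x).symm
      have : Continuous fun sx : ℝ × unitInterval => if sx.1 ≤ c (N+1) then KF N sx
          else (H (N+1)) (Set.projIcc 0 1 zero_le_one (2^(N+2) * (sx.1 - c (N+1))), sx.2) :=
        Continuous.if_le ih hcont2 continuous_fst continuous_const heq
      exact this
  have hKFmem : ∀ N (sx : ℝ × unitInterval),
      KF N sx ∈ ⋃ n, (Set.range fun t : unitInterval => (H n) (t, sx.2)) := by
    intro N
    induction N with
    | zero =>
      intro sx
      rw [hKF0]
      exact Set.mem_iUnion.mpr ⟨0, Set.mem_range_self _⟩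
    | succ N ih =>
      intro sx
      rw [hKFs]
      split_ifs with h1
      · exact ih sx
      · exact Set.mem_iUnion.mpr ⟨N+1, Set.mem_range_self _⟩
  have hdistKF : ∀ N (sx : ℝ × unitInterval),
      dist (KF (N+1) sx) (KF N sx) ≤ ε / 2^(N+4) := by
    intro N sx
    rw [hKFs]
    split_ifs with h1
    · simp only [dist_self]; positivity
    · push_neg at h1
      have h2 : KF N sx = G (N+1) sx.2 := claim2 N sx.1 sx.2 (le_of_lt h1)
      rw [h2]
      exact tb (N+1) sx.2 _
  have haux : ∀ (sx : ℝ × unitInterval) (N M : ℕ), N ≤ M →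
      dist (KF N sx) (KF M sx) ≤ ε/2^(N+3) - ε/2^(M+3) := by
    intro sx N M hNM
    induction M, hNM using Nat.le_induction with
    | base => simp
    | succ M hNM ih =>
      have h2 : (ε:ℝ)/2^(M+4) + (ε/2^(N+3) - ε/2^(M+3)) = ε/2^(N+3) - ε/2^(M+4) := by
        have : (2:ℝ)^(M+4) = 2 * 2^(M+3) := by ring
        rw [this]; field_simp; ring
      calc dist (KF N sx) (KF (M+1) sx)
          ≤ dist (KF N sx) (KF M sx) + dist (KF M sx) (KF (M+1) sx) := dist_triangle _ _ _
        _ ≤ (ε/2^(N+3) - ε/2^(M+3)) + ε/2^(M+4) := by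
            refine add_le_add ih ?_
            rw [dist_comm]
            exact hdistKF M sx
        _ = ε/2^(N+3) - ε/2^(M+4) := by linarith
  have hcauchy : ∀ sx : ℝ × unitInterval, CauchySeq (fun N => KF N sx) := by
    intro sx
    apply cauchySeq_of_le_geometric (1/2) (ε/16) (by norm_num)
    intro N
    rw [dist_comm]
    calc dist (KF (N+1) sx) (KF N sx) ≤ ε / 2^(N+4) := hdistKF N sx
      _ = ε/16 * (1/2)^N := by
          rw [div_pow, one_pow]
          rw [div_mul_div_comm, mul_one]
          congr 1
          rw [pow_add]; ring
  have hlimexists : ∀ sx : ℝ × unitInterval, ∃ y, Tendsto (fun N => KF N sx) atTop (nhds y) :=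
    fun sx => cauchySeq_tendsto_of_complete (hcauchy sx)
  choose Kl hKl using hlimexists
  have hKldist : ∀ N sx, dist (KF N sx) (Kl sx) ≤ ε/2^(N+3) := by
    intro N sx
    have h1 : Tendsto (fun M => dist (KF N sx) (KF M sx)) atTop (nhds (dist (KF N sx) (Kl sx))) :=
      (tendsto_const_nhds.dist (hKl sx))
    apply le_of_tendsto h1
    filter_upwards [eventually_ge_atTop N] with M hM
    calc dist (KF N sx) (KF M sx) ≤ ε/2^(N+3) - ε/2^(M+3) := haux sx N M hM
      _ ≤ ε/2^(N+3) := by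
          have : (0:ℝ) ≤ ε/2^(M+3) := by positivity
          linarith
  have huniform : TendstoUniformly KF Kl atTop := by
    rw [Metric.tendstoUniformly_iff]
    intro η hη
    have hto0 : Tendsto (fun N : ℕ => ε/8 * (1/2)^N) atTop (nhds 0) := by
      have h1 : Tendsto (fun N : ℕ => (1/2:ℝ)^N) atTop (nhds 0) :=
        tendsto_pow_atTop_nhds_zero_of_lt_one (by norm_num) (by norm_num)
      have := h1.const_mul (ε/8)
      simpa using this
    have hev : ∀ᶠ N in atTop, ε/8 * (1/2)^N < η := by
      have := hto0.eventually (eventually_lt_nhds hη)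
      simpa using this
    filter_upwards [hev] with N hN sx
    have heq : ε/2^(N+3) = ε/8 * (1/2)^N := by
      rw [div_pow, one_pow, div_mul_div_comm, mul_one]
      congr 1
      rw [pow_add]; ring
    calc dist (Kl sx) (KF N sx) = dist (KF N sx) (Kl sx) := dist_comm _ _
      _ ≤ ε/2^(N+3) := hKldist N sx
      _ = ε/8 * (1/2)^N := heq
      _ < η := hN
  have hKlcont : Continuous Kl :=
    huniform.continuous (Eventually.of_forall hKFcont).frequently
  have hKl0 : ∀ x : unitInterval, Kl (0, x) = G 0 x := by
    intro x
    apply tendsto_nhds_unique (hKl (0, x))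
    have : (fun N => KF N (0, x)) = fun _ => G 0 x := funext (fun N => claim0 N x)
    rw [this]
    exact tendsto_const_nhds
  have hKl1 : ∀ x : unitInterval, Kl (1, x) = Glim x := by
    intro x
    apply tendsto_nhds_unique (hKl (1, x))
    have heq : (fun N => KF N (1, x)) = fun N => G (N+1) x :=
      funext (fun N => claim2 N 1 x (hcle1 (N+1)))
    rw [heq]
    exact (hlim x).comp (tendsto_add_atTop_nat 1)
  refine ⟨⟨⟨fun tx => Kl ((tx.1 : ℝ), tx.2), ?_⟩, ?_, ?_⟩, ?_⟩
  · exact hKlcont.comp ((continuous_subtype_val.comp continuous_fst).prodMk continuous_snd)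
  · intro x
    exact hKl0 x
  · intro x
    exact hKl1 x
  · intro x
    have hsub : (Set.range fun t : unitInterval => Kl ((t:ℝ), x)) ⊆
        Metric.closedBall (G 0 x) (ε/4) := by
      rintro y ⟨t, rfl⟩
      have hmem : Kl ((t:ℝ), x) ∈ closure (⋃ n, (Set.range fun s : unitInterval => (H n) (s, x))) := by
        apply mem_closure_of_tendsto (hKl ((t:ℝ), x))
        filter_upwards with N
        exact hKFmem N ((t:ℝ), x)
      have hcl : closure (⋃ n, (Set.range fun s : unitInterval => (H n) (s, x))) ⊆
          Metric.closedBall (G 0 x) (ε/4) := by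
        apply closure_minimal _ Metric.isClosed_closedBall
        rintro z hz
        obtain ⟨n, hn⟩ := Set.mem_iUnion.mp hz
        obtain ⟨s, hs⟩ := hn
        rw [Metric.mem_closedBall, ← hs]
        calc dist ((H n) (s, x)) (G 0 x)
            ≤ dist ((H n) (s, x)) (G n x) + dist (G n x) (G 0 x) := dist_triangle _ _ _
          _ ≤ ε/2^(n+3) + (ε/4 - ε/2^(n+2)) := add_le_add (tb n x s) (hG0 n x)
          _ ≤ ε/4 := by
              have h1 : (2:ℝ)^(n+3) = 2 * 2^(n+2) := by ring
              have h2 : (0:ℝ) < 2^(n+2) := by positivity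
              rw [h1]
              rw [div_mul_eq_div_div_swap]
              have : ε/2^(n+2)/2 ≤ ε/2^(n+2) := by
                apply div_le_self (by positivity) (by norm_num)
              linarith
      exact hcl hmem
    apply Metric.diam_le_of_forall_dist_le (by linarith)
    intro y hy z hz
    have hy' := hsub hy
    have hz' := hsub hz
    rw [Metric.mem_closedBall] at hy' hz'
    calc dist y z ≤ dist y (G 0 x) + dist (G 0 x) z := dist_triangle _ _ _
      _ ≤ ε/4 + ε/4 := add_le_add hy' (by rw [dist_comm]; exact hz')
      _ = ε/2 := by ring
end Concat

open Metric Set Filter in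
set_option maxHeartbeats 2000000 in
/-- If a completely metrizable space `X` has the (metric) `DD^{0,0}`-property —
for every `ε > 0` any two points can be moved, along paths of diameter `< ε`, to a
pair of distinct points — then every map `g : I → X` is, for every `ε > 0`,
`ε`-homotopic to a map with zero-dimensional fibers (the `AP(1,0)`-property). -/
theorem stmt12 {X : Type*} [MetricSpace X] [CompleteSpace X]
    (h : ∀ ε : ℝ, 0 < ε → ∀ f g : X, ∃ f' g' : X, f' ≠ g' ∧
      (∃ p : Path f f', Metric.diam (Set.range p) < ε) ∧
      (∃ q : Path g g', Metric.diam (Set.range q) < ε)) :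
    ∀ ε : ℝ, 0 < ε → ∀ g : C(unitInterval, X),
      ∃ g' : C(unitInterval, X), ZeroDimFibers ⇑g' ∧ EHomotopic g g' ε := by
  classical
  intro ε hε g
  -- enumeration of rational pairs
  set e : ℕ → ℚ × ℚ := fun n => (Denumerable.eqv (ℚ × ℚ)).symm n with he
  have hesurj : Function.Surjective e := (Denumerable.eqv (ℚ × ℚ)).symm.surjective
  -- the combined inductive step
  have combined : ∀ (g₀ : C(unitInterval,X)) (F : Finset unitInterval) (n : ℕ),
      ∃ (g₁ : C(unitInterval,X)) (F₁ : Finset unitInterval)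
        (H : ContinuousMap.Homotopy g₀ g₁),
        F ⊆ F₁ ∧ (∀ w ∈ F, g₁ w = g₀ w) ∧
        (∀ x : unitInterval,
          Metric.diam (Set.range fun t : unitInterval => H (t,x)) ≤ ε/2^(n+3)) ∧
        ((0 ≤ (((e n).1:ℝ))) → ((((e n).1:ℝ)) < (((e n).2:ℝ))) → ((((e n).2:ℝ)) ≤ 1) →
          ∃ u v : unitInterval, u ∈ F₁ ∧ v ∈ F₁ ∧ (((e n).1:ℝ)) < u ∧ (u:ℝ) < (((e n).2:ℝ)) ∧
            (((e n).1:ℝ)) < v ∧ (v:ℝ) < (((e n).2:ℝ)) ∧ g₁ u ≠ g₁ v) := by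
    intro g₀ F n
    by_cases hok : (0 ≤ (((e n).1:ℝ))) ∧ ((((e n).1:ℝ)) < (((e n).2:ℝ))) ∧ ((((e n).2:ℝ)) ≤ 1)
    · obtain ⟨h1, h2, h3⟩ := hok
      have hq1 : (((e n).1:ℝ)) ∈ Set.Icc (0:ℝ) 1 := ⟨h1, by linarith⟩
      have hq2 : (((e n).2:ℝ)) ∈ Set.Icc (0:ℝ) 1 := ⟨by linarith, h3⟩
      have hab : (⟨_, hq1⟩ : unitInterval) < ⟨_, hq2⟩ := by
        rw [← Subtype.coe_lt_coe]; exact h2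
      obtain ⟨g₁, u, v, hu1, hu2, hv1, hv2, hne, hfreeze, H, htr⟩ :=
        step_lemma h g₀ F ⟨_, hq1⟩ ⟨_, hq2⟩ hab (ε/2^(n+3)) (by positivity)
      refine ⟨g₁, insert u (insert v F), H, ?_, fun w hw => hfreeze w hw, htr, ?_⟩
      · intro w hw
        exact Finset.mem_insert_of_mem (Finset.mem_insert_of_mem hw)
      · intro _ _ _
        exact ⟨u, v, Finset.mem_insert_self _ _,
          Finset.mem_insert_of_mem (Finset.mem_insert_self _ _),
          hu1, hu2, hv1, hv2, hne⟩
    · refine ⟨g₀, F, ContinuousMap.Homotopy.refl g₀, Finset.Subset.refl _, fun _ _ => rfl, ?_,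
        fun h1 h2 h3 => absurd ⟨h1, h2, h3⟩ hok⟩
      intro x
      apply Metric.diam_le_of_forall_dist_le (by positivity)
      rintro y ⟨t, rfl⟩ z ⟨t', rfl⟩
      show dist ((ContinuousMap.Homotopy.refl g₀) (t, x))
        ((ContinuousMap.Homotopy.refl g₀) (t', x)) ≤ _
      rw [ContinuousMap.Homotopy.refl_apply, ContinuousMap.Homotopy.refl_apply, dist_self]
      positivity
  choose g₁f F₁f Hf hsub hfreeze htr hwit using combined
  -- the iteration
  set GW : ℕ → C(unitInterval,X) × Finset unitInterval := fun n => Nat.rec (g, ∅)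
    (fun n ih => (g₁f ih.1 ih.2 n, F₁f ih.1 ih.2 n)) n with hGW
  have hGW0 : GW 0 = (g, ∅) := rfl
  have hGWs : ∀ n, GW (n+1) = (g₁f (GW n).1 (GW n).2 n, F₁f (GW n).1 (GW n).2 n) :=
    fun n => rfl
  -- basic properties
  have hWmono : ∀ m n, m ≤ n → (GW m).2 ⊆ (GW n).2 := by
    intro m n hmn
    induction n, hmn using Nat.le_induction with
    | base => exact Finset.Subset.refl _
    | succ n hmn ih =>
      refine ih.trans ?_
      rw [hGWs n]
      exact hsub (GW n).1 (GW n).2 n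
  have hfr : ∀ m n, m ≤ n → ∀ w ∈ (GW m).2, (GW n).1 w = (GW m).1 w := by
    intro m n hmn
    induction n, hmn using Nat.le_induction with
    | base => intro w _; rfl
    | succ n hmn ih =>
      intro w hw
      rw [hGWs n]
      have hw' : w ∈ (GW n).2 := hWmono m n hmn hw
      calc (g₁f (GW n).1 (GW n).2 n) w = (GW n).1 w := hfreeze (GW n).1 (GW n).2 n w hw'
        _ = (GW m).1 w := ih w hw
  -- Cauchy sequence of maps
  set hHn : ∀ n, ContinuousMap.Homotopy ((GW n).1) ((GW (n+1)).1) :=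
    (fun n => Hf (GW n).1 (GW n).2 n) with hHndef
  have htrn : ∀ n (x : unitInterval),
      Metric.diam (Set.range fun t : unitInterval => (hHn n) (t,x)) ≤ ε/2^(n+3) := by
    intro n
    simp only [hHndef]
    exact htr (GW n).1 (GW n).2 n
  have hbddn : ∀ n (x : unitInterval),
      Bornology.IsBounded (Set.range fun t : unitInterval => (hHn n) (t, x)) := by
    intro n x
    apply IsCompact.isBounded
    apply isCompact_range
    exact (hHn n).continuous.comp (continuous_id.prodMk continuous_const)
  have hstepdist : ∀ n, dist ((GW n).1) ((GW (n+1)).1) ≤ ε/2^(n+3) := by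
    intro n
    rw [ContinuousMap.dist_le (by positivity)]
    intro x
    have h0 : (GW n).1 x = (hHn n) (0, x) := ((hHn n).apply_zero x).symm
    have h1 : (GW (n+1)).1 x = (hHn n) (1, x) := ((hHn n).apply_one x).symm
    rw [h0, h1]
    exact le_trans (Metric.dist_le_diam_of_mem (hbddn n x)
      (Set.mem_range_self _) (Set.mem_range_self _)) (htrn n x)
  have hcauchy : CauchySeq (fun n => (GW n).1) := by
    apply cauchySeq_of_le_geometric (1/2) (ε/8) (by norm_num)
    intro n
    calc dist ((GW n).1) ((GW (n+1)).1) ≤ ε/2^(n+3) := hstepdist n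
      _ = ε/8 * (1/2)^n := by
          rw [div_pow, one_pow, div_mul_div_comm, mul_one]
          congr 1
          rw [pow_add]; ring
  obtain ⟨Glim, hGlim⟩ := cauchySeq_tendsto_of_complete hcauchy
  have hptlim : ∀ x : unitInterval,
      Tendsto (fun n => (GW n).1 x) atTop (nhds (Glim x)) := by
    intro x
    exact ((continuous_eval_const x).tendsto Glim).comp hGlim
  have hfrozenlim : ∀ n, ∀ w ∈ (GW n).2, Glim w = (GW n).1 w := by
    intro n w hw
    apply tendsto_nhds_unique (hptlim w)
    apply Tendsto.congr' _
      (tendsto_const_nhds : Tendsto (fun _ : ℕ => (GW n).1 w) atTop (nhds ((GW n).1 w)))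
    filter_upwards [eventually_ge_atTop n] with m hm
    exact (hfr n m hm w hw).symm
  refine ⟨Glim, ?_, ?_⟩
  · -- zero-dimensional fibers
    intro y
    apply dimle0_of_dense_compl
    intro x₀ y₀ hxy
    obtain ⟨p, hp1, hp2⟩ := exists_rat_btwn (show (x₀:ℝ) < (y₀:ℝ) from hxy)
    obtain ⟨q, hq1, hq2⟩ := exists_rat_btwn hp2
    obtain ⟨n, hn⟩ := hesurj (p, q)
    have he1 : ((e n).1 : ℝ) = (p:ℝ) := by rw [hn]
    have he2 : ((e n).2 : ℝ) = (q:ℝ) := by rw [hn]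
    have h1 : 0 ≤ ((e n).1 : ℝ) := by
      rw [he1]; exact le_trans x₀.2.1 (le_of_lt hp1)
    have h2 : ((e n).1 : ℝ) < ((e n).2 : ℝ) := by rw [he1, he2]; exact hq1
    have h3 : ((e n).2 : ℝ) ≤ 1 := by
      rw [he2]; exact le_trans (le_of_lt hq2) y₀.2.2
    obtain ⟨u, v, huF, hvF, hu1, hu2, hv1, hv2, hne⟩ :=
      hwit (GW n).1 (GW n).2 n h1 h2 h3
    -- u, v are in W (n+1) and G (n+1) = g₁f ...
    have huF' : u ∈ (GW (n+1)).2 := by rw [hGWs n]; exact huF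
    have hvF' : v ∈ (GW (n+1)).2 := by rw [hGWs n]; exact hvF
    have hGlu : Glim u = (GW (n+1)).1 u := hfrozenlim (n+1) u huF'
    have hGlv : Glim v = (GW (n+1)).1 v := hfrozenlim (n+1) v hvF'
    have hGne : Glim u ≠ Glim v := by
      rw [hGlu, hGlv]
      rw [hGWs n]
      exact hne
    have humem : x₀ < u ∧ u < y₀ := by
      constructor
      · rw [← Subtype.coe_lt_coe]
        calc (x₀:ℝ) < (p:ℝ) := hp1
          _ = ((e n).1:ℝ) := he1.symm
          _ < u := hu1
      · rw [← Subtype.coe_lt_coe]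
        calc (u:ℝ) < ((e n).2:ℝ) := hu2
          _ = (q:ℝ) := he2
          _ < (y₀:ℝ) := hq2
    have hvmem : x₀ < v ∧ v < y₀ := by
      constructor
      · rw [← Subtype.coe_lt_coe]
        calc (x₀:ℝ) < (p:ℝ) := hp1
          _ = ((e n).1:ℝ) := he1.symm
          _ < v := hv1
      · rw [← Subtype.coe_lt_coe]
        calc (v:ℝ) < ((e n).2:ℝ) := hv2
          _ = (q:ℝ) := he2
          _ < (y₀:ℝ) := hq2
    by_cases hu : u ∈ (⇑Glim ⁻¹' {y})
    · refine ⟨v, hvmem.1, hvmem.2, ?_⟩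
      intro hv
      apply hGne
      rw [Set.mem_preimage, Set.mem_singleton_iff] at hu hv
      rw [hu, hv]
    · exact ⟨u, humem.1, humem.2, hu⟩
  · -- the ε-homotopy
    obtain ⟨K, hK⟩ := concat_homotopy ε hε (fun n => (GW n).1) Glim hHn htrn hptlim
    exact ⟨K, fun x => lt_of_le_of_lt (hK x) (by linarith)⟩
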